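/- Let k be an integrable Mercer kernel on 𝕋 = [0,∞) with RKHS H, assume every element of H is Lebesgue integrable on 𝕋, let u : ℝ → ℝ be an essentially bounded measurable function, let t_1,…,t_n ∈ 𝕋, let y_1,…,y_n ∈ ℝ, and let λ > 0. Then the regularized least-squares problem min over g ∈ H of Σ_{i=1}^n (L_u^{t_i}(g) − y_i)² + λ ‖g‖_H², where L_u^{t_i}(g) := ∫_{[0,∞)} g(s) u(t_i − s) ds, admits a unique minimizer. -/

import Mathlib

open scoped InnerProductSpace
open MeasureTheory Set
open scoped ENNReal NNReal

/-- For an integrable Mercer kernel `k` on `[0,∞)` with RKHS `H` whose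
elements are all integrable on `[0,∞)`, an essentially bounded measurable input
`u : ℝ → ℝ`, sampling times `t i ≥ 0`, data `y i` and `λ > 0`, the regularized
least-squares problem `min_{g ∈ H} ∑ i (L_u^{t i}(g) - y i)² + λ‖g‖²` with
`L_u^{t i}(g) = ∫_{[0,∞)} g(s) u(t i - s) ds` admits a unique minimizer. -/
theorem stmt_10
    {H : Type*} [NormedAddCommGroup H] [InnerProductSpace ℝ H] [CompleteSpace H]
    (k : ℝ → ℝ → ℝ)
    (hcont : ContinuousOn (fun p : ℝ × ℝ => k p.1 p.2) (Ici 0 ×ˢ Ici 0))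
    (hsymm : ∀ s ∈ Ici (0:ℝ), ∀ t ∈ Ici (0:ℝ), k s t = k t s)
    (hpsd : ∀ (n : ℕ) (t : Fin n → ℝ), (∀ i, 0 ≤ t i) →
      ∀ a : Fin n → ℝ, 0 ≤ ∑ i, ∑ j, a i * a j * k (t i) (t j))
    (hint : IntegrableOn (fun p : ℝ × ℝ => k p.1 p.2) (Ici 0 ×ˢ Ici 0))
    (ι : H →ₗ[ℝ] (ℝ → ℝ))
    (hι : ∀ g₁ g₂ : H, (∀ t ∈ Ici (0:ℝ), ι g₁ t = ι g₂ t) → g₁ = g₂)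
    (K : ℝ → H) (hK : ∀ t ∈ Ici (0:ℝ), ∀ s ∈ Ici (0:ℝ), ι (K t) s = k t s)
    (hrep : ∀ g : H, ∀ t ∈ Ici (0:ℝ), ⟪g, K t⟫_ℝ = ι g t)
    (hL1 : ∀ g : H, IntegrableOn (ι g) (Ici 0))
    (u : ℝ → ℝ) (hu : MemLp u ⊤ volume)
    (n : ℕ) (t : Fin n → ℝ) (ht : ∀ i, 0 ≤ t i)
    (y : Fin n → ℝ) (lam : ℝ) (hlam : 0 < lam) :
    ∃! gstar : H, ∀ g : H,
      (∑ i, ((∫ s in Ici (0:ℝ), ι gstar s * u (t i - s)) - y i) ^ 2)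
          + lam * ‖gstar‖ ^ 2 ≤
        (∑ i, ((∫ s in Ici (0:ℝ), ι g s * u (t i - s)) - y i) ^ 2)
          + lam * ‖g‖ ^ 2 := by
  classical
  haveI : Fact ((1:ENNReal) ≤ 1) := ⟨le_refl _⟩
  set C : ℝ := (eLpNorm u ⊤ volume).toReal with hCdef
  have hCbound : ∀ᵐ x ∂(volume : Measure ℝ), ‖u x‖ ≤ C := by
    have h2 : eLpNormEssSup u volume ≠ ⊤ := by
      have := hu.2
      rw [eLpNorm_exponent_top] at this
      exact this.ne
    filter_upwards [ae_le_eLpNormEssSup (f := u) (μ := volume)] with x hx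
    calc ‖u x‖ = ((‖u x‖₊ : ℝ≥0∞)).toReal := by simp
      _ ≤ C := by
          rw [hCdef, eLpNorm_exponent_top]
          exact ENNReal.toReal_mono h2 hx
  have hC0 : 0 ≤ C := ENNReal.toReal_nonneg
  -- a.e. bound for translated-reflected u
  have hub : ∀ τ : ℝ, ∀ᵐ s ∂(volume.restrict (Ici (0:ℝ))), ‖u (τ - s)‖ ≤ C := fun τ =>
    ae_restrict_of_ae ((Measure.measurePreserving_sub_left volume τ).quasiMeasurePreserving.ae hCbound)
  have humeas : ∀ τ : ℝ,
      AEStronglyMeasurable (fun s => u (τ - s)) (volume.restrict (Ici (0:ℝ))) := fun τ =>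
    (hu.aestronglyMeasurable.comp_quasiMeasurePreserving
      (Measure.measurePreserving_sub_left volume τ).quasiMeasurePreserving).restrict
  have hInt : ∀ (g : H) (τ : ℝ),
      Integrable (fun s => ι g s * u (τ - s)) (volume.restrict (Ici (0:ℝ))) := by
    intro g τ
    have := Integrable.bdd_mul (hL1 g) (f := fun s => u (τ - s)) (humeas τ) (hub τ)
    simpa [mul_comm] using this
  -- the L¹ embedding
  let T : H →ₗ[ℝ] (Lp ℝ 1 (volume.restrict (Ici (0:ℝ)))) :=
    { toFun := fun g => (hL1 g).toL1 (ι g)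
      map_add' := by
        intro g₁ g₂
        rw [← Integrable.toL1_add _ _ (hL1 g₁) (hL1 g₂)]
        simp_rw [← map_add ι]
      map_smul' := by
        intro c g
        rw [RingHom.id_apply, ← Integrable.toL1_smul' _ (hL1 g) c]
        simp_rw [← map_smul ι] }
  have hTcont : Continuous T := by
    apply LinearMap.continuous_of_seq_closed_graph
    intro gs g f hg hTg
    obtain ⟨ns, hns, hae⟩ :=
      (tendstoInMeasure_of_tendsto_Lp (E := ℝ) hTg).exists_seq_tendsto_ae
    have h1 : ∀ᵐ x ∂(volume.restrict (Ici (0:ℝ))),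
        ∀ m : ℕ, (T (gs m) : ℝ → ℝ) x = ι (gs m) x :=
      MeasureTheory.ae_all_iff.mpr fun m => (hL1 (gs m)).coeFn_toL1
    have h2 : (T g : ℝ → ℝ) =ᵐ[volume.restrict (Ici (0:ℝ))] ι g := (hL1 g).coeFn_toL1
    have h3 : ∀ᵐ x ∂(volume.restrict (Ici (0:ℝ))), x ∈ Ici (0:ℝ) :=
      ae_restrict_mem measurableSet_Ici
    refine MeasureTheory.Lp.ext (f := f) (g := T g) ?_
    filter_upwards [hae, h1, h2, h3] with x hx h1x h2x h3x
    have htend1 : Filter.Tendsto (fun m : ℕ => ι (gs m) x) Filter.atTop (nhds (ι g x)) := by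
      have : Filter.Tendsto (fun m : ℕ => ⟪gs m, K x⟫_ℝ) Filter.atTop (nhds ⟪g, K x⟫_ℝ) :=
        hg.inner tendsto_const_nhds
      simpa only [hrep _ x h3x] using this
    have htend2 : Filter.Tendsto (fun i : ℕ => ι (gs (ns i)) x) Filter.atTop
        (nhds (ι g x)) := htend1.comp hns.tendsto_atTop
    have htend3 : Filter.Tendsto (fun i : ℕ => ι (gs (ns i)) x) Filter.atTop (nhds (f x)) := by
      simpa only [Function.comp_apply, h1x] using hx
    exact (tendsto_nhds_unique htend3 htend2).trans h2x.symm
  let T' : H →L[ℝ] (Lp ℝ 1 (volume.restrict (Ici (0:ℝ)))) := ⟨T, hTcont⟩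
  -- bound the sampling functionals
  have hTnorm : ∀ g : H, ‖T' g‖ = ∫ s in Ici (0:ℝ), ‖ι g s‖ := by
    intro g
    rw [show (T' g : Lp ℝ 1 (volume.restrict (Ici (0:ℝ)))) = (hL1 g).toL1 (ι g) from rfl,
      L1.norm_eq_integral_norm]
    refine integral_congr_ae ?_
    filter_upwards [(hL1 g).coeFn_toL1] with s hs
    rw [hs]
  have key : ∀ (g : H) (τ : ℝ),
      ‖∫ s in Ici (0:ℝ), ι g s * u (τ - s)‖ ≤ (C * ‖T'‖) * ‖g‖ := by
    intro g τ
    have h1 : ‖∫ s in Ici (0:ℝ), ι g s * u (τ - s)‖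
        ≤ ∫ s in Ici (0:ℝ), ‖ι g s * u (τ - s)‖ := norm_integral_le_integral_norm _
    have h2 : ∫ s in Ici (0:ℝ), ‖ι g s * u (τ - s)‖
        ≤ ∫ s in Ici (0:ℝ), C * ‖ι g s‖ := by
      refine integral_mono_ae (hInt g τ).norm ((hL1 g).norm.const_mul C) ?_
      filter_upwards [hub τ] with s hs
      calc ‖ι g s * u (τ - s)‖ = ‖ι g s‖ * ‖u (τ - s)‖ := norm_mul _ _
        _ ≤ ‖ι g s‖ * C := mul_le_mul_of_nonneg_left hs (norm_nonneg _)
        _ = C * ‖ι g s‖ := mul_comm _ _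
    have h3 : ∫ s in Ici (0:ℝ), C * ‖ι g s‖ = C * ‖T' g‖ := by
      rw [hTnorm g, integral_const_mul]
    have h4 : C * ‖T' g‖ ≤ C * (‖T'‖ * ‖g‖) :=
      mul_le_mul_of_nonneg_left (T'.le_opNorm g) hC0
    calc ‖∫ s in Ici (0:ℝ), ι g s * u (τ - s)‖
        ≤ ∫ s in Ici (0:ℝ), ‖ι g s * u (τ - s)‖ := h1
      _ ≤ ∫ s in Ici (0:ℝ), C * ‖ι g s‖ := h2
      _ = C * ‖T' g‖ := h3
      _ ≤ C * (‖T'‖ * ‖g‖) := h4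
      _ = (C * ‖T'‖) * ‖g‖ := by ring
  -- the sampling functionals as continuous linear maps
  let ℓ : Fin n → (H →ₗ[ℝ] ℝ) := fun i =>
    { toFun := fun g => ∫ s in Ici (0:ℝ), ι g s * u (t i - s)
      map_add' := by
        intro g₁ g₂
        have h : ∀ s, ι (g₁ + g₂) s = ι g₁ s + ι g₂ s := fun s => by simp
        simp only [h, add_mul]
        exact integral_add (hInt g₁ (t i)) (hInt g₂ (t i))
      map_smul' := by
        intro c g
        have h : ∀ s, ι (c • g) s = c * ι g s := fun s => by simp
        simp only [h, mul_assoc, RingHom.id_apply, smul_eq_mul]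
        exact integral_const_mul c _ }
  let F : Fin n → (H →L[ℝ] ℝ) := fun i =>
    LinearMap.mkContinuous (ℓ i) (C * ‖T'‖) (fun g => key g (t i))
  let v : Fin n → H := fun i => (InnerProductSpace.toDual ℝ H).symm (F i)
  have hvF : ∀ (i : Fin n) (g : H),
      ⟪v i, g⟫_ℝ = ∫ s in Ici (0:ℝ), ι g s * u (t i - s) := by
    intro i g
    exact InnerProductSpace.toDual_symm_apply
  -- the bilinear form
  let Cin : H →L[ℝ] H →L[ℝ] ℝ :=
    LinearMap.mkContinuous
      { toFun := fun g => innerSL ℝ g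
        map_add' := fun a b => by ext x; simp [inner_add_left]
        map_smul' := fun c a => by ext x; simp [real_inner_smul_left] }
      1 (fun g => by
        refine le_trans ((innerSL ℝ g).opNorm_le_bound (norm_nonneg g) (fun x => ?_)) ?_
        · simpa using norm_inner_le_norm (𝕜 := ℝ) g x
        · simp)
  have hCin : ∀ g h : H, Cin g h = ⟪g, h⟫_ℝ := fun g h => rfl
  let B : H →L[ℝ] H →L[ℝ] ℝ :=
    (∑ i, (innerSL ℝ (v i)).smulRight (innerSL ℝ (v i))) + lam • Cin
  have hB : ∀ g h : H, B g h = (∑ i, ⟪v i, g⟫_ℝ * ⟪v i, h⟫_ℝ) + lam * ⟪g, h⟫_ℝ := by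
    intro g h
    simp [B, ContinuousLinearMap.sum_apply, smul_eq_mul, hCin]
  have hcoer : IsCoercive B := by
    refine ⟨lam, hlam, fun g => ?_⟩
    rw [hB g g, real_inner_self_eq_norm_mul_norm g]
    have : (0:ℝ) ≤ ∑ i, ⟪v i, g⟫_ℝ * ⟪v i, g⟫_ℝ :=
      Finset.sum_nonneg fun i _ => mul_self_nonneg _
    linarith
  set w : H := ∑ i, y i • v i with hwdef
  set gstar : H := hcoer.continuousLinearEquivOfBilin.symm w with hgdef
  have hlax : ∀ h : H, B gstar h = ⟪w, h⟫_ℝ := by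
    intro h
    have h0 := hcoer.continuousLinearEquivOfBilin_apply gstar h
    rw [hgdef] at h0 ⊢
    rw [hcoer.continuousLinearEquivOfBilin.apply_symm_apply w] at h0
    exact h0.symm
  have hwinner : ∀ h : H, ⟪w, h⟫_ℝ = ∑ i, y i * ⟪v i, h⟫_ℝ := by
    intro h
    rw [hwdef, sum_inner]
    exact Finset.sum_congr rfl fun i _ => real_inner_smul_left _ _ _
  -- the objective in inner-product form
  set Jq : H → ℝ := fun g => (∑ i, (⟪v i, g⟫_ℝ - y i) ^ 2) + lam * ‖g‖ ^ 2 with hJdef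
  have hmain : ∀ g : H, Jq g = Jq gstar + B (g - gstar) (g - gstar) := by
    intro g
    set d : H := g - gstar with hddef
    have hgd : g = gstar + d := by rw [hddef]; abel
    have hinner : ∀ i, ⟪v i, g⟫_ℝ = ⟪v i, gstar⟫_ℝ + ⟪v i, d⟫_ℝ := by
      intro i; rw [hgd, inner_add_right]
    have hnorm : ‖g‖ ^ 2 = ‖gstar‖ ^ 2 + 2 * ⟪gstar, d⟫_ℝ + ‖d‖ ^ 2 := by
      rw [hgd]; exact norm_add_sq_real _ _
    have horth : (∑ i, ⟪v i, gstar⟫_ℝ * ⟪v i, d⟫_ℝ) + lam * ⟪gstar, d⟫_ℝ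
        = ∑ i, y i * ⟪v i, d⟫_ℝ := by
      rw [← hB gstar d, hlax d, hwinner d]
    have hBdd : B d d = (∑ i, ⟪v i, d⟫_ℝ * ⟪v i, d⟫_ℝ) + lam * (‖d‖ * ‖d‖) := by
      rw [hB d d, real_inner_self_eq_norm_mul_norm]
    have hsum : ∑ i, (⟪v i, g⟫_ℝ - y i) ^ 2
        = ∑ i, ((⟪v i, gstar⟫_ℝ - y i) ^ 2 + ⟪v i, d⟫_ℝ * ⟪v i, d⟫_ℝ
            + 2 * (⟪v i, gstar⟫_ℝ * ⟪v i, d⟫_ℝ - y i * ⟪v i, d⟫_ℝ)) := by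
      refine Finset.sum_congr rfl fun i _ => ?_
      rw [hinner i]; ring
    rw [hJdef]
    simp only []
    rw [hsum, hBdd, hnorm]
    rw [Finset.sum_add_distrib, Finset.sum_add_distrib, ← Finset.mul_sum,
      Finset.sum_sub_distrib]
    nlinarith [horth]
  -- rewrite the goal
  have hgoal : ∀ g : H,
      ((∑ i, ((∫ s in Ici (0:ℝ), ι g s * u (t i - s)) - y i) ^ 2) + lam * ‖g‖ ^ 2) = Jq g := by
    intro g
    rw [hJdef]
    simp only [hvF]
  refine ⟨gstar, ?_, ?_⟩
  · intro g
    rw [hgoal gstar, hgoal g]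
    have h1 := hmain g
    obtain ⟨c, hc, hcoer'⟩ := hcoer
    have h2 := hcoer' (g - gstar)
    nlinarith [norm_nonneg (g - gstar), mul_self_nonneg ‖g - gstar‖]
  · intro g' hg'
    have h1 := hg' gstar
    rw [hgoal gstar, hgoal g'] at h1
    have h2 := hmain g'
    obtain ⟨c, hc, hcoer'⟩ := hcoer
    have h3 := hcoer' (g' - gstar)
    have hBle : B (g' - gstar) (g' - gstar) ≤ 0 := by linarith
    have h3' : c * (‖g' - gstar‖ * ‖g' - gstar‖) ≤ c * 0 := by
      have hassoc := mul_assoc c ‖g' - gstar‖ ‖g' - gstar‖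
      have : c * 0 = 0 := mul_zero c
      linarith
    have hy : ‖g' - gstar‖ * ‖g' - gstar‖ ≤ 0 := le_of_mul_le_mul_left h3' hc
    have hy0 : ‖g' - gstar‖ * ‖g' - gstar‖ = 0 := le_antisymm hy (mul_self_nonneg _)
    have h4 : ‖g' - gstar‖ = 0 := mul_self_eq_zero.mp hy0
    have h5 : g' - gstar = 0 := norm_eq_zero.mp h4
    rw [sub_eq_zero] at h5
    exact h5
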